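/- For any density matrix ρ on C^{d_A} ⊗ C^{d_B}, S_L(ρ_AB) ≤ S_L(ρ_A) + S_L(ρ_B) (subadditivity of the linear entropy, q = 2 Tsallis entropy), where S_L(ρ) = 1 − Tr(ρ²). -/

import Mathlib

open Matrix BigOperators Kronecker ComplexOrder

noncomputable def purity {n : Type*} [Fintype n] (ρ : Matrix n n ℂ) : ℝ :=
  ((ρ * ρ).trace).re

def IsDensity {n : Type*} [Fintype n] (ρ : Matrix n n ℂ) : Prop :=
  ρ.PosSemidef ∧ ρ.trace = 1

noncomputable def ptraceB {m p : Type*} [Fintype p] (ρ : Matrix (m × p) (m × p) ℂ) :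
    Matrix m m ℂ :=
  Matrix.of fun i j => ∑ k, ρ (i, k) (j, k)

noncomputable def ptraceA {m p : Type*} [Fintype m] (ρ : Matrix (m × p) (m × p) ℂ) :
    Matrix p p ℂ :=
  Matrix.of fun i j => ∑ k, ρ (k, i) (k, j)

noncomputable def ptraceMid {a b c : Type*} [Fintype b]
    (ρ : Matrix (a × b × c) (a × b × c) ℂ) : Matrix (a × c) (a × c) ℂ :=
  Matrix.of fun i j => ∑ k, ρ (i.1, k, i.2) (j.1, k, j.2)

noncomputable def linEnt {n : Type*} [Fintype n] (ρ : Matrix n n ℂ) : ℝ := 1 - purity ρ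

set_option linter.unusedSectionVars false

section AuxPerm
variable {N : Type*} [Fintype N] [DecidableEq N]

noncomputable def permM (e : N ≃ N) : Matrix N N ℂ := (1 : Matrix N N ℂ).submatrix e id

lemma permM_mul (e : N ≃ N) (M : Matrix N N ℂ) : permM e * M = M.submatrix e id := by
  ext p q
  simp [permM, Matrix.mul_apply, Matrix.one_apply]

lemma mul_permM (e : N ≃ N) (M : Matrix N N ℂ) : M * permM e = M.submatrix id e.symm := by
  ext p q
  have : ∀ r : N, e r = q ↔ r = e.symm q := fun r => by
    rw [Equiv.apply_eq_iff_eq_symm_apply]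
  simp [permM, Matrix.mul_apply, Matrix.one_apply, this]

lemma permM_mul_permM (e f : N ≃ N) : permM e * permM f = permM (e.trans f) := by
  rw [permM_mul]; ext p q; rfl

lemma permM_refl : permM (Equiv.refl N) = 1 := by
  ext p q; rfl

lemma permM_conjTranspose {e : N ≃ N} (he : ∀ p, e (e p) = p) : (permM e)ᴴ = permM e := by
  ext p q
  have : e q = p ↔ e p = q := by
    constructor <;> intro h <;> rw [← h, he]
  simp only [permM, Matrix.conjTranspose_apply, Matrix.submatrix_apply, id_eq,
    Matrix.one_apply, this]
  split <;> simp

lemma trace_mul_permM (e : N ≃ N) (M : Matrix N N ℂ) :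
    (M * permM e).trace = ∑ p, M (e p) p := by
  rw [mul_permM, Matrix.trace]
  refine (Fintype.sum_equiv e _ _ fun p => ?_).symm
  simp [Matrix.diag, Equiv.symm_apply_apply]

end AuxPerm

lemma kron_conjTranspose {m n : Type*} [Fintype m] [Fintype n]
    (A : Matrix m m ℂ) (B : Matrix n n ℂ) : (A ⊗ₖ B)ᴴ = Aᴴ ⊗ₖ Bᴴ := by
  ext ⟨i, k⟩ ⟨j, l⟩
  simp [Matrix.conjTranspose_apply, mul_comm]

lemma posSemidef_kron {m n : Type*} [Fintype m] [Fintype n] [DecidableEq m] [DecidableEq n]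
    {A : Matrix m m ℂ} {B : Matrix n n ℂ} (hA : A.PosSemidef) (hB : B.PosSemidef) :
    (A ⊗ₖ B).PosSemidef := by
  exact hA.kronecker hB

lemma psd_trace_nonneg {N : Type*} [Fintype N] [DecidableEq N]
    {M : Matrix N N ℂ} (h : M.PosSemidef) : (0:ℂ) ≤ M.trace := by
  refine Finset.sum_nonneg fun i _ => ?_
  exact h.diag_nonneg

def swapFst {α β : Type*} : ((α × β) × (α × β)) ≃ ((α × β) × (α × β)) where
  toFun p := ((p.2.1, p.1.2), (p.1.1, p.2.2))
  invFun p := ((p.2.1, p.1.2), (p.1.1, p.2.2))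
  left_inv p := rfl
  right_inv p := rfl

def swapSnd {α β : Type*} : ((α × β) × (α × β)) ≃ ((α × β) × (α × β)) where
  toFun p := ((p.1.1, p.2.2), (p.2.1, p.1.2))
  invFun p := ((p.1.1, p.2.2), (p.2.1, p.1.2))
  left_inv p := rfl
  right_inv p := rfl

section TraceIds
variable {α β : Type*} [Fintype α] [Fintype β] [DecidableEq α] [DecidableEq β]

lemma sum_rot (f : α → β → α → β → ℂ) :
    ∑ i, ∑ k, ∑ j, ∑ l, f i k j l = ∑ k, ∑ l, ∑ i, ∑ j, f i k j l := by
  rw [Finset.sum_comm]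
  refine Finset.sum_congr rfl fun k _ => ?_
  calc ∑ i, ∑ j, ∑ l, f i k j l
      = ∑ i, ∑ l, ∑ j, f i k j l :=
        Finset.sum_congr rfl fun i _ => Finset.sum_comm
    _ = ∑ l, ∑ i, ∑ j, f i k j l := Finset.sum_comm

lemma sum_swap_inner (f : α → β → α → β → ℂ) :
    ∑ i, ∑ k, ∑ j, ∑ l, f i k j l = ∑ i, ∑ j, ∑ k, ∑ l, f i k j l :=
  Finset.sum_congr rfl fun i _ => Finset.sum_comm

lemma traceId_A (ρ : Matrix (α × β) (α × β) ℂ) :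
    ((ρ ⊗ₖ ρ) * permM (swapFst (α := α) (β := β))).trace
      = (ptraceB ρ * ptraceB ρ).trace := by
  calc ((ρ ⊗ₖ ρ) * permM swapFst).trace
      = ∑ p, (ρ ⊗ₖ ρ) (swapFst p) p := trace_mul_permM _ _
    _ = ∑ i, ∑ k, ∑ j, ∑ l, ρ (j,k) (i,k) * ρ (i,l) (j,l) := by
        simp [swapFst, Fintype.sum_prod_type, Matrix.kroneckerMap_apply]
    _ = ∑ i, ∑ j, ∑ k, ∑ l, ρ (j,k) (i,k) * ρ (i,l) (j,l) := sum_swap_inner _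
    _ = ∑ i, ∑ j, (∑ k, ρ (j,k) (i,k)) * (∑ l, ρ (i,l) (j,l)) := by
        refine Finset.sum_congr rfl fun i _ => Finset.sum_congr rfl fun j _ => ?_
        rw [Finset.sum_mul_sum]
    _ = ∑ j, ∑ i, (∑ k, ρ (j,k) (i,k)) * (∑ l, ρ (i,l) (j,l)) := Finset.sum_comm
    _ = (ptraceB ρ * ptraceB ρ).trace := by
        rw [Matrix.trace]
        simp only [Matrix.diag_apply, Matrix.mul_apply, ptraceB, Matrix.of_apply]

lemma traceId_B (ρ : Matrix (α × β) (α × β) ℂ) :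
    ((ρ ⊗ₖ ρ) * permM (swapSnd (α := α) (β := β))).trace
      = (ptraceA ρ * ptraceA ρ).trace := by
  calc ((ρ ⊗ₖ ρ) * permM swapSnd).trace
      = ∑ p, (ρ ⊗ₖ ρ) (swapSnd p) p := trace_mul_permM _ _
    _ = ∑ i, ∑ k, ∑ j, ∑ l, ρ (i,l) (i,k) * ρ (j,k) (j,l) := by
        simp [swapSnd, Fintype.sum_prod_type, Matrix.kroneckerMap_apply]
    _ = ∑ k, ∑ l, ∑ i, ∑ j, ρ (i,l) (i,k) * ρ (j,k) (j,l) := sum_rot _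
    _ = ∑ k, ∑ l, (∑ i, ρ (i,l) (i,k)) * (∑ j, ρ (j,k) (j,l)) := by
        refine Finset.sum_congr rfl fun k _ => Finset.sum_congr rfl fun l _ => ?_
        rw [Finset.sum_mul_sum]
    _ = ∑ l, ∑ k, (∑ i, ρ (i,l) (i,k)) * (∑ j, ρ (j,k) (j,l)) := Finset.sum_comm
    _ = (ptraceA ρ * ptraceA ρ).trace := by
        rw [Matrix.trace]
        simp only [Matrix.diag_apply, Matrix.mul_apply, ptraceA, Matrix.of_apply]

lemma traceId_C (ρ : Matrix (α × β) (α × β) ℂ) :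
    ((ρ ⊗ₖ ρ) * permM ((swapFst (α := α) (β := β)).trans swapSnd)).trace
      = (ρ * ρ).trace := by
  calc ((ρ ⊗ₖ ρ) * permM (swapFst.trans swapSnd)).trace
      = ∑ p, (ρ ⊗ₖ ρ) ((swapFst.trans swapSnd) p) p := trace_mul_permM _ _
    _ = ∑ i, ∑ k, ∑ j, ∑ l, ρ (j,l) (i,k) * ρ (i,k) (j,l) := by
        simp [swapFst, swapSnd, Equiv.trans_apply, Fintype.sum_prod_type,
          Matrix.kroneckerMap_apply]
    _ = (ρ * ρ).trace := by
        rw [Matrix.trace]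
        simp only [Matrix.diag_apply, Matrix.mul_apply, Fintype.sum_prod_type]
        exact Finset.sum_congr rfl fun i _ => Finset.sum_congr rfl fun k _ =>
          Finset.sum_congr rfl fun j _ => Finset.sum_congr rfl fun l _ => mul_comm _ _

end TraceIds

theorem linear_entropy_subadditivity
    (dA dB : ℕ) (hdA : 0 < dA) (hdB : 0 < dB)
    (ρ : Matrix (Fin dA × Fin dB) (Fin dA × Fin dB) ℂ) (hρ : IsDensity ρ) :
    linEnt ρ ≤ linEnt (ptraceB ρ) + linEnt (ptraceA ρ) := by
  classical
  obtain ⟨hpsd, htr⟩ := hρ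
  let eA := swapFst (α := Fin dA) (β := Fin dB)
  let eB := swapSnd (α := Fin dA) (β := Fin dB)
  let X := ρ ⊗ₖ ρ
  let FA := permM eA
  let FB := permM eB
  let FC := permM (eA.trans eB)
  let G := 1 - FA - FB + FC
  have hX : X.PosSemidef := posSemidef_kron hpsd hpsd
  have hAA : FA * FA = 1 := by
    rw [show FA * FA = permM (eA.trans eA) from permM_mul_permM _ _,
      show eA.trans eA = Equiv.refl _ from Equiv.ext fun p => rfl, permM_refl]
  have hBB : FB * FB = 1 := by
    rw [show FB * FB = permM (eB.trans eB) from permM_mul_permM _ _,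
      show eB.trans eB = Equiv.refl _ from Equiv.ext fun p => rfl, permM_refl]
  have hCC : FC * FC = 1 := by
    rw [show FC * FC = permM ((eA.trans eB).trans (eA.trans eB)) from permM_mul_permM _ _,
      show (eA.trans eB).trans (eA.trans eB) = Equiv.refl _ from Equiv.ext fun p => rfl,
      permM_refl]
  have hAB : FA * FB = FC := permM_mul_permM _ _
  have hBA : FB * FA = FC := by
    rw [show FB * FA = permM (eB.trans eA) from permM_mul_permM _ _,
      show eB.trans eA = eA.trans eB from Equiv.ext fun p => rfl]
  have hAC : FA * FC = FB := by
    rw [show FA * FC = permM (eA.trans (eA.trans eB)) from permM_mul_permM _ _,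
      show eA.trans (eA.trans eB) = eB from Equiv.ext fun p => rfl]
  have hCA : FC * FA = FB := by
    rw [show FC * FA = permM ((eA.trans eB).trans eA) from permM_mul_permM _ _,
      show (eA.trans eB).trans eA = eB from Equiv.ext fun p => rfl]
  have hBC : FB * FC = FA := by
    rw [show FB * FC = permM (eB.trans (eA.trans eB)) from permM_mul_permM _ _,
      show eB.trans (eA.trans eB) = eA from Equiv.ext fun p => rfl]
  have hCB : FC * FB = FA := by
    rw [show FC * FB = permM ((eA.trans eB).trans eB) from permM_mul_permM _ _,
      show (eA.trans eB).trans eB = eA from Equiv.ext fun p => rfl]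
  have hGH : Gᴴ = G := by
    have h1 : FAᴴ = FA := permM_conjTranspose (fun p => rfl)
    have h2 : FBᴴ = FB := permM_conjTranspose (fun p => rfl)
    have h3 : FCᴴ = FC := permM_conjTranspose (fun p => rfl)
    show (1 - FA - FB + FC)ᴴ = 1 - FA - FB + FC
    simp [Matrix.conjTranspose_sub, Matrix.conjTranspose_add, h1, h2, h3]
  have hGG : G * G = G + G + G + G := by
    show (1 - FA - FB + FC) * (1 - FA - FB + FC)
      = (1 - FA - FB + FC) + (1 - FA - FB + FC) + (1 - FA - FB + FC) + (1 - FA - FB + FC)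
    simp only [sub_mul, add_mul, mul_sub, mul_add, one_mul, mul_one,
      hAA, hBB, hCC, hAB, hBA, hAC, hCA, hBC, hCB]
    abel
  have hpos : (0:ℂ) ≤ (X * G).trace + ((X * G).trace + ((X * G).trace + (X * G).trace)) := by
    have h1 : (Gᴴ * X * G).PosSemidef := hX.conjTranspose_mul_mul_same G
    have h2 : (0:ℂ) ≤ (Gᴴ * X * G).trace := psd_trace_nonneg h1
    have h3 : (Gᴴ * X * G).trace
        = (X * G).trace + ((X * G).trace + ((X * G).trace + (X * G).trace)) := by
      rw [hGH]
      calc (G * X * G).trace = (G * (X * G)).trace := by rw [mul_assoc]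
        _ = ((X * G) * G).trace := Matrix.trace_mul_comm _ _
        _ = (X * (G * G)).trace := by rw [mul_assoc]
        _ = (X * (G + G + G + G)).trace := by rw [hGG]
        _ = _ := by simp [Matrix.mul_add, Matrix.trace_add, add_assoc]
    rw [← h3]; exact h2
  have htrX : X.trace = 1 := by
    rw [show X = ρ ⊗ₖ ρ from rfl, Matrix.trace_kronecker, htr, mul_one]
  have hTA : (X * FA).trace = (ptraceB ρ * ptraceB ρ).trace := traceId_A ρ
  have hTB : (X * FB).trace = (ptraceA ρ * ptraceA ρ).trace := traceId_B ρ
  have hTC : (X * FC).trace = (ρ * ρ).trace := traceId_C ρ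
  have hexp : (X * G).trace
      = 1 - (ptraceB ρ * ptraceB ρ).trace - (ptraceA ρ * ptraceA ρ).trace + (ρ * ρ).trace := by
    show (X * (1 - FA - FB + FC)).trace = _
    rw [Matrix.mul_add, Matrix.mul_sub, Matrix.mul_sub, Matrix.mul_one,
      Matrix.trace_add, Matrix.trace_sub, Matrix.trace_sub, htrX, hTA, hTB, hTC]
  have hre : (0:ℝ) ≤ ((X * G).trace).re := by
    have h4 := (Complex.le_def.mp hpos).1
    simp only [Complex.add_re, Complex.zero_re] at h4
    linarith
  rw [hexp] at hre
  simp only [Complex.add_re, Complex.sub_re, Complex.one_re] at hre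
  simp only [linEnt, purity]
  linarith
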